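/- Let v : 2^N → ℝ≥0 be a monotone gross-substitutes valuation, let A, B ⊆ N be disjoint, let j ∉ A ∪ B, and let x ≥ 0. Suppose v(A∪{j}∪{i}) - v(A∪{j}) = 0 for all i ∈ B, and 0 ≤ v(A∪{j}) - v(A) - x < v(A∪B) - v(A). Then there exists i ∈ B such that v(A∪{j}) - v(A) - x < v(A∪{i}) - v(A). -/

import Mathlib

open Finset

namespace Stmt10X

variable {n : ℕ}

lemma sum_mem_const (U X : Finset (Fin n)) (c : ℝ) :
    ∑ a ∈ U, (if a ∈ X then c else 0) = c * (U ∩ X).card := by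
  rw [Finset.sum_ite_mem, Finset.sum_const, nsmul_eq_mul, mul_comm]

lemma sum_not_mem_const (U X : Finset (Fin n)) (c : ℝ) :
    ∑ a ∈ U, (if a ∈ X then 0 else c) = c * (U \ X).card := by
  have h : ∀ a : Fin n, (if a ∈ X then (0:ℝ) else c) = (if a ∈ Xᶜ then c else 0) := by
    intro a; by_cases h : a ∈ X <;> simp [h]
  simp_rw [h]
  rw [Finset.sum_ite_mem, Finset.sum_const, nsmul_eq_mul, mul_comm]
  congr 2
  rw [Finset.sdiff_eq_inter_compl]

lemma submod_single (v : Finset (Fin n) → ℝ)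
    (hmono : ∀ S T : Finset (Fin n), S ⊆ T → v S ≤ v T)
    (hgs : ∀ p p' : Fin n → ℝ, (∀ k, p k ≤ p' k) →
      ∀ S : Finset (Fin n),
        (∀ T : Finset (Fin n), v T - ∑ i ∈ T, p i ≤ v S - ∑ i ∈ S, p i) →
        ∃ T : Finset (Fin n),
          (∀ U : Finset (Fin n), v U - ∑ i ∈ U, p' i ≤ v T - ∑ i ∈ T, p' i) ∧
          ∀ k ∈ S, p k = p' k → k ∈ T)
    (S : Finset (Fin n)) (i k : Fin n) (hiS : i ∉ S) (hkS : k ∉ S) (hik : i ≠ k) :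
    v (insert i (insert k S)) - v (insert k S) ≤ v (insert i S) - v S := by
  by_contra hcon
  push_neg at hcon
  set a : ℝ := v (insert i S) - v S with ha
  set b : ℝ := v (insert i (insert k S)) - v (insert k S) with hb
  set d : ℝ := v (insert k S) - v S with hd
  have ha0 : 0 ≤ a := by have := hmono S (insert i S) (subset_insert _ _); linarith
  have hb0 : 0 ≤ b := by
    have := hmono (insert k S) (insert i (insert k S)) (subset_insert _ _); linarith
  have hd0 : 0 ≤ d := by have := hmono S (insert k S) (subset_insert _ _); linarith
  set q : ℝ := (a + b) / 2 with hq
  set t : ℝ := b + d - q with ht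
  have hq0 : 0 ≤ q := by simp [hq]; linarith
  have haq : a < q := by simp [hq]; linarith
  have hqb : q < b := by simp [hq]; linarith
  have ht0 : 0 < t := by simp [ht]; linarith
  set Sik : Finset (Fin n) := insert i (insert k S) with hSik
  set M : ℝ := |v Finset.univ| + |v S| + q + t + 1 with hM
  have hMbig : v Finset.univ - M ≤ v S - 1 := by
    have h1 : v Finset.univ ≤ |v Finset.univ| := le_abs_self _
    have h2 : -|v S| ≤ v S := neg_abs_le _
    simp only [hM]; linarith
  set p : Fin n → ℝ := fun a' =>
    (if a' = i then q else 0) + (if a' = k then t else 0) + (if a' ∈ Sik then 0 else M)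
    with hp
  have hsum : ∀ U : Finset (Fin n), ∑ a' ∈ U, p a' =
      (if i ∈ U then q else 0) + (if k ∈ U then t else 0) + M * (U \ Sik).card := by
    intro U
    simp only [hp]
    rw [Finset.sum_add_distrib, Finset.sum_add_distrib, Finset.sum_ite_eq',
      Finset.sum_ite_eq', sum_not_mem_const]
  have hiSik : i ∈ Sik := mem_insert_self _ _
  have hkSik : k ∈ Sik := mem_insert_of_mem (mem_insert_self _ _)
  have hvSik : v Sik = v S + b + d := by rw [hb, hd]; ring
  -- value of insert i (insert k S) minus price = v S
  have hsumSik : ∑ a' ∈ Sik, p a' = q + t := by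
    rw [hsum]
    simp [hiSik, hkSik]
  -- optimality of Sik at p
  have hopt : ∀ U : Finset (Fin n), v U - ∑ a' ∈ U, p a' ≤ v Sik - ∑ a' ∈ Sik, p a' := by
    intro U
    rw [hsumSik]
    have hgoalval : v Sik - (q + t) = v S := by rw [hvSik]; simp only [ht]; ring
    rw [hgoalval]
    by_cases hjunk : (U \ Sik).Nonempty
    · have hc1 : 1 ≤ (U \ Sik).card := Finset.card_pos.mpr hjunk
      have hc1' : (1:ℝ) ≤ ((U \ Sik).card : ℝ) := by exact_mod_cast hc1
      have hM0 : 0 < M := by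
        have := abs_nonneg (v Finset.univ); have := abs_nonneg (v S); simp only [hM]; linarith
      have h01 : (0:ℝ) ≤ (if i ∈ U then q else 0) := by split <;> simp [hq0]
      have h02 : (0:ℝ) ≤ (if k ∈ U then t else 0) := by split <;> simp [ht0.le]
      have hge : M ≤ ∑ a' ∈ U, p a' := by
        rw [hsum]
        nlinarith
      have hvU : v U ≤ v Finset.univ := hmono _ _ (subset_univ U)
      linarith
    · have hUF : U ⊆ Sik := by
        rw [not_nonempty_iff_eq_empty, Finset.sdiff_eq_empty_iff_subset] at hjunk
        exact hjunk
      have hjunk0 : (U \ Sik) = ∅ := Finset.sdiff_eq_empty_iff_subset.mpr hUF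
      rw [hsum, hjunk0]
      simp only [card_empty, Nat.cast_zero, mul_zero, add_zero]
      by_cases hiU : i ∈ U <;> by_cases hkU : k ∈ U
      · have hUS : U ∪ S = Sik := by
          apply Finset.Subset.antisymm
          · intro x hx
            rcases Finset.mem_union.mp hx with h | h
            · exact hUF h
            · exact mem_insert_of_mem (mem_insert_of_mem h)
          · intro x hx
            simp only [hSik, mem_insert] at hx
            rcases hx with rfl | rfl | h
            · exact Finset.mem_union_left _ hiU
            · exact Finset.mem_union_left _ hkU
            · exact Finset.mem_union_right _ h
        have hvU : v U ≤ v Sik := by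
          have := hmono U (U ∪ S) Finset.subset_union_left
          rw [hUS] at this; exact this
        rw [if_pos hiU, if_pos hkU]
        linarith [hvSik]
      · have hUS : U ∪ S = insert i S := by
          apply Finset.Subset.antisymm
          · intro x hx
            rcases Finset.mem_union.mp hx with h | h
            · have := hUF h
              simp only [hSik, mem_insert] at this
              rcases this with rfl | rfl | h'
              · exact mem_insert_self _ _
              · exact absurd h hkU
              · exact mem_insert_of_mem h'
            · exact mem_insert_of_mem h
          · intro x hx
            rcases mem_insert.mp hx with rfl | h
            · exact Finset.mem_union_left _ hiU
            · exact Finset.mem_union_right _ h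
        have hvU : v U ≤ v (insert i S) := by
          have := hmono U (U ∪ S) Finset.subset_union_left
          rw [hUS] at this; exact this
        rw [if_pos hiU, if_neg hkU]
        have : v (insert i S) = v S + a := by simp only [ha]; ring
        linarith
      · have hUS : U ∪ S = insert k S := by
          apply Finset.Subset.antisymm
          · intro x hx
            rcases Finset.mem_union.mp hx with h | h
            · have := hUF h
              simp only [hSik, mem_insert] at this
              rcases this with rfl | rfl | h'
              · exact absurd h hiU
              · exact mem_insert_self _ _
              · exact mem_insert_of_mem h'
            · exact mem_insert_of_mem h
          · intro x hx
            rcases mem_insert.mp hx with rfl | h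
            · exact Finset.mem_union_left _ hkU
            · exact Finset.mem_union_right _ h
        have hvU : v U ≤ v (insert k S) := by
          have := hmono U (U ∪ S) Finset.subset_union_left
          rw [hUS] at this; exact this
        rw [if_neg hiU, if_pos hkU]
        have : v (insert k S) = v S + d := by simp only [hd]; ring
        linarith
      · have hUS : U ⊆ S := by
          intro x hx
          have := hUF hx
          simp only [hSik, mem_insert] at this
          rcases this with rfl | rfl | h'
          · exact absurd hx hiU
          · exact absurd hx hkU
          · exact h'
        have hvU : v U ≤ v S := hmono _ _ hUS
        rw [if_neg hiU, if_neg hkU]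
        linarith
  -- raise price of k by 1
  set p' : Fin n → ℝ := fun a' => if a' = k then t + 1 else p a' with hp'
  have hle : ∀ a', p a' ≤ p' a' := by
    intro a'
    by_cases h : a' = k
    · rw [h]
      have hpk : p k = t := by simp [hp, hkSik, Ne.symm hik]
      have hpk' : p' k = t + 1 := by simp [hp']
      rw [hpk, hpk']; linarith
    · simp [hp', h]
  obtain ⟨T, hTopt, hTkeep⟩ := hgs p p' hle Sik hopt
  have hiT : i ∈ T := by
    apply hTkeep i hiSik
    simp [hp', hik]
  have hST : S ⊆ T := by
    intro s hs
    apply hTkeep s (mem_insert_of_mem (mem_insert_of_mem hs))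
    have : s ≠ k := fun h => hkS (h ▸ hs)
    simp [hp', this]
  have hsum' : ∀ U : Finset (Fin n), ∑ a' ∈ U, p' a' =
      ∑ a' ∈ U, p a' + (if k ∈ U then 1 else 0) := by
    intro U
    have hh : ∀ a', p' a' = p a' + (if a' = k then 1 else 0) := by
      intro a'
      by_cases h : a' = k
      · rw [h]
        have hpk : p k = t := by simp [hp, hkSik, Ne.symm hik]
        have hpk' : p' k = t + 1 := by simp [hp']
        rw [hpk, hpk']; simp
      · simp [hp', h]
    simp_rw [hh]
    rw [Finset.sum_add_distrib, Finset.sum_ite_eq']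
  -- utility of S at p'
  have hkey := hTopt S
  have hsumS : ∑ a' ∈ S, p' a' = 0 := by
    rw [hsum', hsum]
    have h1 : i ∉ S := hiS
    have h2 : k ∉ S := hkS
    have h3 : S \ Sik = ∅ := by
      rw [Finset.sdiff_eq_empty_iff_subset]
      intro s hs; exact mem_insert_of_mem (mem_insert_of_mem hs)
    rw [h3]
    simp [h1, h2]
  rw [hsumS] at hkey
  -- now hkey : v S - 0 ≤ v T - ∑ p' T
  by_cases hjunk : (T \ Sik).Nonempty
  · have hc1 : 1 ≤ (T \ Sik).card := Finset.card_pos.mpr hjunk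
    have hc1' : (1:ℝ) ≤ ((T \ Sik).card : ℝ) := by exact_mod_cast hc1
    have hM0 : 0 < M := by
      have := abs_nonneg (v Finset.univ); have := abs_nonneg (v S)
      simp only [hM]; linarith
    have h01 : (0:ℝ) ≤ (if i ∈ T then q else 0) := by split <;> simp [hq0]
    have h02 : (0:ℝ) ≤ (if k ∈ T then t else 0) := by split <;> simp [ht0.le]
    have h03 : (0:ℝ) ≤ (if k ∈ T then (1:ℝ) else 0) := by split <;> norm_num
    have hge : M ≤ ∑ a' ∈ T, p' a' := by
      rw [hsum', hsum]
      nlinarith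
    have hvT : v T ≤ v Finset.univ := hmono _ _ (subset_univ T)
    linarith
  · have hTF : T ⊆ Sik := by
      rw [not_nonempty_iff_eq_empty, Finset.sdiff_eq_empty_iff_subset] at hjunk
      exact hjunk
    have hjunk0 : (T \ Sik) = ∅ := Finset.sdiff_eq_empty_iff_subset.mpr hTF
    by_cases hkT : k ∈ T
    · -- T = Sik
      have hTeq : T = Sik := by
        apply Finset.Subset.antisymm hTF
        intro s hs
        rcases mem_insert.mp hs with rfl | hs'
        · exact hiT
        · rcases mem_insert.mp hs' with rfl | hs''
          · exact hkT
          · exact hST hs''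
      rw [hsum', hsum, hjunk0, hTeq] at hkey
      rw [hTeq] at hkT hiT
      simp only [if_pos hkT, if_pos hiT, card_empty, Nat.cast_zero, mul_zero, add_zero] at hkey
      -- v S ≤ v Sik - (q + t + 1) = v S - 1
      have : v Sik = v S + b + d := hvSik
      linarith [hkey]
    · -- T = insert i S
      have hTeq : T = insert i S := by
        apply Finset.Subset.antisymm
        · intro s hs
          have := hTF hs
          rcases mem_insert.mp this with rfl | hs'
          · exact mem_insert_self _ _
          · rcases mem_insert.mp hs' with rfl | hs''
            · exact absurd hs hkT
            · exact mem_insert_of_mem hs''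
        · intro s hs
          rcases mem_insert.mp hs with rfl | hs'
          · exact hiT
          · exact hST hs'
      rw [hsum', hsum, hjunk0, hTeq] at hkey
      have hiIn : i ∈ insert i S := mem_insert_self _ _
      have hkOut : k ∉ insert i S := by
        intro h
        rcases mem_insert.mp h with h' | h'
        · exact hik h'.symm
        · exact hkS h'
      simp only [if_pos hiIn, if_neg hkOut, card_empty, Nat.cast_zero, mul_zero, add_zero] at hkey
      -- v S ≤ v (insert i S) - q = v S + a - q < v S
      have : v (insert i S) = v S + a := by rw [ha]; ring
      linarith [hkey]

lemma submod_gen (v : Finset (Fin n) → ℝ)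
    (hmono : ∀ S T : Finset (Fin n), S ⊆ T → v S ≤ v T)
    (hgs : ∀ p p' : Fin n → ℝ, (∀ k, p k ≤ p' k) →
      ∀ S : Finset (Fin n),
        (∀ T : Finset (Fin n), v T - ∑ i ∈ T, p i ≤ v S - ∑ i ∈ S, p i) →
        ∃ T : Finset (Fin n),
          (∀ U : Finset (Fin n), v U - ∑ i ∈ U, p' i ≤ v T - ∑ i ∈ T, p' i) ∧
          ∀ k ∈ S, p k = p' k → k ∈ T) :
    ∀ (C S : Finset (Fin n)) (i : Fin n), i ∉ S ∪ C →
      v (insert i (S ∪ C)) - v (S ∪ C) ≤ v (insert i S) - v S := by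
  intro C
  induction C using Finset.induction_on with
  | empty => intro S i _; simp
  | @insert k C hk ih =>
    intro S i hi
    have hiS : i ∉ S := fun h => hi (Finset.mem_union_left _ h)
    have hiC : i ∉ C := fun h => hi (Finset.mem_union_right _ (mem_insert_of_mem h))
    have hikne : i ≠ k := fun h => hi (Finset.mem_union_right _ (h ▸ mem_insert_self _ _))
    have hiSC : i ∉ S ∪ C := fun h =>
      (Finset.mem_union.mp h).elim (fun h' => hiS h') (fun h' => hiC h')
    by_cases hkSC : k ∈ S ∪ C
    · have heq : S ∪ insert k C = S ∪ C := by
        rw [Finset.union_insert, Finset.insert_eq_self.mpr hkSC]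
      rw [heq]
      exact ih S i hiSC
    · have heq : S ∪ insert k C = insert k (S ∪ C) := Finset.union_insert k S C
      rw [heq]
      have hh1 := submod_single v hmono hgs (S ∪ C) i k hiSC hkSC hikne
      have hh2 := ih S i hiSC
      linarith

lemma aux (v : Finset (Fin n) → ℝ)
    (hmono : ∀ S T : Finset (Fin n), S ⊆ T → v S ≤ v T)
    (hgs : ∀ p p' : Fin n → ℝ, (∀ k, p k ≤ p' k) →
      ∀ S : Finset (Fin n),
        (∀ T : Finset (Fin n), v T - ∑ i ∈ T, p i ≤ v S - ∑ i ∈ S, p i) →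
        ∃ T : Finset (Fin n),
          (∀ U : Finset (Fin n), v U - ∑ i ∈ U, p' i ≤ v T - ∑ i ∈ T, p' i) ∧
          ∀ k ∈ S, p k = p' k → k ∈ T)
    (A : Finset (Fin n)) (j : Fin n) (x : ℝ) (hx : 0 ≤ x)
    (h1 : 0 ≤ v (insert j A) - v A - x) :
    ∀ B : Finset (Fin n), Disjoint A B → j ∉ A ∪ B →
      (∀ i ∈ B, v (insert i (insert j A)) - v (insert j A) = 0) →
      v (insert j A) - v A - x < v (A ∪ B) - v A →
      ∃ i ∈ B, v (insert j A) - v A - x < v (insert i A) - v A := by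
  intro B
  induction B using Finset.strongInductionOn with
  | _ B ih =>
    intro hAB hj hB0 h2
    set α : ℝ := v (insert j A) - v A - x with hα
    by_cases hex : ∃ C, C ⊂ B ∧ v A + α < v (A ∪ C)
    · obtain ⟨C, hCB, hCv⟩ := hex
      have hACj : j ∉ A ∪ C := by
        intro h
        rcases Finset.mem_union.mp h with h' | h'
        · exact hj (Finset.mem_union_left _ h')
        · exact hj (Finset.mem_union_right _ (hCB.subset h'))
      obtain ⟨i, hiC, hiv⟩ := ih C hCB (hAB.mono_right (le_iff_subset.mpr hCB.subset))
        hACj (fun i hi => hB0 i (hCB.subset hi)) (by linarith)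
      exact ⟨i, hCB.subset hiC, hiv⟩
    · push_neg at hex
      have hjA : j ∉ A := fun h => hj (Finset.mem_union_left _ h)
      have hjB : j ∉ B := fun h => hj (Finset.mem_union_right _ h)
      have hBne : B.Nonempty := by
        rcases B.eq_empty_or_nonempty with h | h
        · exfalso
          rw [h, Finset.union_empty] at h2
          linarith
        · exact h
      obtain ⟨i0, hi0⟩ := hBne
      by_cases hB1 : B = {i0}
      · refine ⟨i0, hi0, ?_⟩
        have heq : A ∪ B = insert i0 A := by rw [hB1, Finset.union_comm]; exact (Finset.insert_eq i0 A).symm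
        rw [heq] at h2
        linarith
      · exfalso
        have hcard : 2 ≤ B.card := by
          by_contra hc
          push_neg at hc
          have hcardone : B.card = 1 := by
            have := Finset.card_pos.mpr ⟨i0, hi0⟩
            omega
          obtain ⟨y, hy⟩ := Finset.card_eq_one.mp hcardone
          apply hB1
          rw [hy] at hi0
          rw [Finset.mem_singleton] at hi0
          rw [hy, hi0]
        have hB0' : ∀ C : Finset (Fin n), C ⊆ B → v (insert j A ∪ C) = v (insert j A) := by
          intro C
          induction C using Finset.induction_on with
          | empty => intro _; simp
          | @insert a C ha ihC =>
            intro hsub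
            have haB : a ∈ B := hsub (mem_insert_self _ _)
            have hCB : C ⊆ B := (Finset.insert_subset_iff.mp hsub).2
            have heq : insert j A ∪ insert a C = insert a (insert j A ∪ C) :=
              Finset.union_insert a (insert j A) C
            rw [heq]
            have hanotin : a ∉ insert j A ∪ C := by
              intro h
              rcases Finset.mem_union.mp h with h' | h'
              · rcases Finset.mem_insert.mp h' with rfl | h''
                · exact hjB haB
                · exact Finset.disjoint_left.mp hAB h'' haB
              · exact ha h'
            have hsm := submod_gen v hmono hgs C (insert j A) a hanotin
            have hzero := hB0 a haB
            have hmle := hmono (insert j A ∪ C) (insert a (insert j A ∪ C)) (subset_insert _ _)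
            have hic := ihC hCB
            linarith
        set m : ℝ := (B.card : ℝ) with hm
        have hm2 : (2:ℝ) ≤ m := by rw [hm]; exact_mod_cast hcard
        set c : ℝ := (v (A ∪ B) - v A - α) / m with hc
        have hc0 : 0 < c := div_pos (by linarith) (by linarith)
        have hcm : c * m = v (A ∪ B) - v A - α := by
          rw [hc]; field_simp
        set δ : ℝ := min c 1 / 2 with hδ
        have hδ0 : 0 < δ := by
          have := lt_min hc0 one_pos
          rw [hδ]; linarith
        have hδc : δ < c := by
          have := min_le_left c 1
          rw [hδ]; linarith
        have hδ1 : δ < 1 := by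
          have := min_le_right c 1
          rw [hδ]; linarith
        set pj : ℝ := x + δ with hpj
        have hpj0 : 0 < pj := by rw [hpj]; linarith
        set Full : Finset (Fin n) := A ∪ B ∪ {j} with hFullDef
        set M : ℝ := |v Finset.univ| + |v A| + pj + c + 1 with hMdef
        have hM0 : 0 < M := by
          have := abs_nonneg (v Finset.univ); have := abs_nonneg (v A)
          rw [hMdef]; linarith
        have hMc : c ≤ M := by
          have := abs_nonneg (v Finset.univ); have := abs_nonneg (v A)
          rw [hMdef]; linarith
        have hMbig : v Finset.univ - M ≤ v A - 1 := by
          have hu := le_abs_self (v Finset.univ)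
          have hva := neg_abs_le (v A)
          rw [hMdef]; linarith
        set p : Fin n → ℝ := fun a =>
          (if a = j then pj else 0) + (if a ∈ B then c else 0) + (if a ∈ Full then 0 else M)
          with hpdef
        have hsum : ∀ U : Finset (Fin n), ∑ a ∈ U, p a =
            (if j ∈ U then pj else 0) + c * ((U ∩ B).card : ℝ) + M * ((U \ Full).card : ℝ) := by
          intro U
          simp only [hpdef]
          rw [Finset.sum_add_distrib, Finset.sum_add_distrib, Finset.sum_ite_eq',
            sum_mem_const, sum_not_mem_const]
        have hABB : (A ∪ B) ∩ B = B := Finset.inter_eq_right.mpr Finset.subset_union_right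
        have hABfull : (A ∪ B) \ Full = ∅ := by
          rw [Finset.sdiff_eq_empty_iff_subset, hFullDef]
          exact Finset.subset_union_left
        have hPAB : ∑ a ∈ A ∪ B, p a = c * m := by
          rw [hsum, hABB, hABfull, if_neg hj]
          rw [hm]
          simp
        have hvjA : v (insert j A) = v A + α + x := by rw [hα]; ring
        have hopt : ∀ U : Finset (Fin n), v U - ∑ a ∈ U, p a ≤ v (A ∪ B) - ∑ a ∈ A ∪ B, p a := by
          intro U
          rw [hPAB]
          have hgoal : v (A ∪ B) - c * m = v A + α := by linarith [hcm]
          rw [hgoal]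
          by_cases hjunk : (U \ Full).Nonempty
          · have hc1 : (1:ℝ) ≤ ((U \ Full).card : ℝ) := by
              exact_mod_cast Finset.card_pos.mpr hjunk
            have h01 : (0:ℝ) ≤ (if j ∈ U then pj else 0) := by split <;> linarith
            have h02 : (0:ℝ) ≤ c * ((U ∩ B).card : ℝ) := mul_nonneg hc0.le (Nat.cast_nonneg _)
            have hge : M ≤ ∑ a ∈ U, p a := by rw [hsum]; nlinarith
            have hvU : v U ≤ v Finset.univ := hmono _ _ (Finset.subset_univ U)
            linarith
          · have hUF : U ⊆ Full := by
              rw [Finset.not_nonempty_iff_eq_empty, Finset.sdiff_eq_empty_iff_subset] at hjunk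
              exact hjunk
            have hjunk0 : U \ Full = ∅ := Finset.sdiff_eq_empty_iff_subset.mpr hUF
            have hcb0 : (0:ℝ) ≤ c * ((U ∩ B).card : ℝ) := mul_nonneg hc0.le (Nat.cast_nonneg _)
            rw [hsum, hjunk0]
            simp only [Finset.card_empty, Nat.cast_zero, mul_zero, add_zero]
            by_cases hjU : j ∈ U
            · have hUsub : U ⊆ insert j A ∪ (U ∩ B) := by
                intro a ha
                have h := hUF ha
                rw [hFullDef] at h
                simp only [Finset.mem_union, Finset.mem_singleton] at h
                rcases h with (h | h) | h
                · exact Finset.mem_union_left _ (mem_insert_of_mem h)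
                · exact Finset.mem_union_right _ (Finset.mem_inter.mpr ⟨ha, h⟩)
                · exact Finset.mem_union_left _ (h ▸ mem_insert_self _ _)
              have hvU : v U ≤ v (insert j A) := by
                calc v U ≤ v (insert j A ∪ (U ∩ B)) := hmono _ _ hUsub
                _ = v (insert j A) := hB0' _ Finset.inter_subset_right
              rw [if_pos hjU]
              rw [hpj] at *
              linarith [hvjA]
            · have hUsub : U ⊆ A ∪ (U ∩ B) := by
                intro a ha
                have h := hUF ha
                rw [hFullDef] at h
                simp only [Finset.mem_union, Finset.mem_singleton] at h
                rcases h with (h | h) | h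
                · exact Finset.mem_union_left _ h
                · exact Finset.mem_union_right _ (Finset.mem_inter.mpr ⟨ha, h⟩)
                · exact absurd (h ▸ ha) hjU
              rw [if_neg hjU]
              have hsubB : U ∩ B ≤ B := Finset.inter_subset_right
              rcases lt_or_eq_of_le hsubB with hss | hEq
              · have hb := hex (U ∩ B) hss
                have hvU : v U ≤ v (A ∪ (U ∩ B)) := hmono _ _ hUsub
                linarith
              · rw [hEq] at hUsub
                have hvU : v U ≤ v (A ∪ B) := hmono _ _ hUsub
                rw [hEq, ← hm]
                linarith [hcm]
        have hi0j : i0 ≠ j := fun h => hjB (h ▸ hi0)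
        have hi0A : i0 ∉ A := fun h => Finset.disjoint_left.mp hAB h hi0
        have hi0Full : i0 ∈ Full := by
          rw [hFullDef]
          exact Finset.mem_union_left _ (Finset.mem_union_right _ hi0)
        have hpi0 : p i0 = c := by
          simp only [hpdef]
          rw [if_neg hi0j, if_pos hi0, if_pos hi0Full]; ring
        set p' : Fin n → ℝ := fun a => if a = i0 then M else p a with hp'def
        have hle : ∀ a, p a ≤ p' a := by
          intro a
          by_cases h : a = i0
          · rw [h]
            have hh : p' i0 = M := by simp [hp'def]
            rw [hh, hpi0]
            exact hMc
          · simp [hp'def, h]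
        obtain ⟨T, hTopt, hTkeep⟩ := hgs p p' hle (A ∪ B) hopt
        have hp'eq : ∀ a, a ≠ i0 → p' a = p a := by intro a h; simp [hp'def, h]
        have hAT : A ⊆ T := by
          intro a ha
          have hne : a ≠ i0 := fun h => hi0A (h ▸ ha)
          exact hTkeep a (Finset.mem_union_left _ ha) (hp'eq a hne).symm
        have hBT : ∀ a ∈ B, a ≠ i0 → a ∈ T := fun a ha hne =>
          hTkeep a (Finset.mem_union_right _ ha) (hp'eq a hne).symm
        have hsum' : ∀ U : Finset (Fin n), ∑ a ∈ U, p' a =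
            ∑ a ∈ U, p a + (if i0 ∈ U then M - c else 0) := by
          intro U
          have hh : ∀ a, p' a = p a + (if a = i0 then M - c else 0) := by
            intro a
            by_cases h : a = i0
            · rw [h]
              have h1' : p' i0 = M := by simp [hp'def]
              rw [h1', hpi0]; simp
            · simp [hp'def, h]
          simp_rw [hh]
          rw [Finset.sum_add_distrib, Finset.sum_ite_eq']
        have hkey := hTopt (insert j A)
        have hjAB : (insert j A) ∩ B = ∅ := by
          ext a
          simp only [Finset.mem_inter, Finset.mem_insert, Finset.notMem_empty, iff_false, not_and]
          rintro (rfl | hA') hB'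
          · exact hjB hB'
          · exact Finset.disjoint_left.mp hAB hA' hB'
        have hjAfull : (insert j A) \ Full = ∅ := by
          rw [Finset.sdiff_eq_empty_iff_subset, hFullDef]
          intro a ha
          rcases Finset.mem_insert.mp ha with rfl | h
          · exact Finset.mem_union_right _ (Finset.mem_singleton_self _)
          · exact Finset.mem_union_left _ (Finset.mem_union_left _ h)
        have hi0jA : i0 ∉ insert j A := by
          intro h
          rcases Finset.mem_insert.mp h with h' | h'
          · exact hi0j h'
          · exact hi0A h'
        have hLHS : ∑ a ∈ insert j A, p' a = pj := by
          rw [hsum', hsum, hjAB, hjAfull, if_pos (mem_insert_self j A), if_neg hi0jA]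
          simp
        rw [hLHS] at hkey
        by_cases hbad : i0 ∈ T ∨ (T \ Full).Nonempty
        · have h01 : (0:ℝ) ≤ (if j ∈ T then pj else 0) := by split <;> linarith
          have hge : M ≤ ∑ a ∈ T, p' a := by
            rw [hsum', hsum]
            rcases hbad with hb | hb
            · have hi0TB : i0 ∈ T ∩ B := Finset.mem_inter.mpr ⟨hb, hi0⟩
              have hc1 : (1:ℝ) ≤ ((T ∩ B).card : ℝ) := by
                exact_mod_cast Finset.card_pos.mpr ⟨i0, hi0TB⟩
              have h03 : (0:ℝ) ≤ M * ((T \ Full).card : ℝ) := mul_nonneg hM0.le (Nat.cast_nonneg _)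
              have h05 : c * 1 ≤ c * ((T ∩ B).card : ℝ) :=
                mul_le_mul_of_nonneg_left hc1 hc0.le
              rw [if_pos hb]
              linarith
            · have hc1 : (1:ℝ) ≤ ((T \ Full).card : ℝ) := by
                exact_mod_cast Finset.card_pos.mpr hb
              have h02 : (0:ℝ) ≤ c * ((T ∩ B).card : ℝ) := mul_nonneg hc0.le (Nat.cast_nonneg _)
              have h04 : (0:ℝ) ≤ (if i0 ∈ T then M - c else 0) := by
                split
                · linarith
                · exact le_refl 0
              have h05 : M * 1 ≤ M * ((T \ Full).card : ℝ) :=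
                mul_le_mul_of_nonneg_left hc1 hM0.le
              linarith
          have hvT : v T ≤ v Finset.univ := hmono _ _ (Finset.subset_univ T)
          rw [hpj] at hkey
          linarith [hvjA, hMbig]
        · push_neg at hbad
          obtain ⟨hi0T, hTfe⟩ := hbad
          have hTF : T ⊆ Full := by
            rw [Finset.sdiff_eq_empty_iff_subset] at hTfe
            exact hTfe
          have hTfull0 : T \ Full = ∅ := Finset.sdiff_eq_empty_iff_subset.mpr hTF
          have hcarde : (((B.erase i0).card : ℕ) : ℝ) = m - 1 := by
            rw [Finset.card_erase_of_mem hi0, Nat.cast_sub (by omega : 1 ≤ B.card),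
              Nat.cast_one, ← hm]
          by_cases hjT : j ∈ T
          · have hTeq : T = insert j (A ∪ B.erase i0) := by
              apply Finset.Subset.antisymm
              · intro a ha
                have h := hTF ha
                rw [hFullDef] at h
                simp only [Finset.mem_union, Finset.mem_singleton] at h
                rcases h with (h | h) | h
                · exact mem_insert_of_mem (Finset.mem_union_left _ h)
                · have hne : a ≠ i0 := fun he => hi0T (he ▸ ha)
                  exact mem_insert_of_mem
                    (Finset.mem_union_right _ (Finset.mem_erase.mpr ⟨hne, h⟩))
                · exact h ▸ mem_insert_self _ _
              · intro a ha
                rcases Finset.mem_insert.mp ha with rfl | h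
                · exact hjT
                · rcases Finset.mem_union.mp h with h' | h'
                  · exact hAT h'
                  · exact hBT a (Finset.mem_of_mem_erase h') (Finset.ne_of_mem_erase h')
            have hTB : T ∩ B = B.erase i0 := by
              rw [hTeq]
              ext a
              simp only [Finset.mem_inter, Finset.mem_insert, Finset.mem_union, Finset.mem_erase]
              constructor
              · rintro ⟨(rfl | (h | h)), hB'⟩
                · exact absurd hB' hjB
                · exact absurd hB' (Finset.disjoint_left.mp hAB h)
                · exact h
              · rintro ⟨hne, hB'⟩
                exact ⟨Or.inr (Or.inr ⟨hne, hB'⟩), hB'⟩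
            have hvT : v T = v (insert j A) := by
              rw [hTeq, ← Finset.insert_union]
              exact hB0' _ (Finset.erase_subset _ _)
            rw [hsum', hsum, hTfull0, hTB, if_neg hi0T, if_pos hjT, hcarde, hvT] at hkey
            simp only [Finset.card_empty, Nat.cast_zero, mul_zero, add_zero] at hkey
            have hprod : 0 < c * (m - 1) := mul_pos hc0 (by linarith)
            linarith
          · have hTeq : T = A ∪ B.erase i0 := by
              apply Finset.Subset.antisymm
              · intro a ha
                have h := hTF ha
                rw [hFullDef] at h
                simp only [Finset.mem_union, Finset.mem_singleton] at h
                rcases h with (h | h) | h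
                · exact Finset.mem_union_left _ h
                · have hne : a ≠ i0 := fun he => hi0T (he ▸ ha)
                  exact Finset.mem_union_right _ (Finset.mem_erase.mpr ⟨hne, h⟩)
                · exact absurd (h ▸ ha) hjT
              · intro a ha
                rcases Finset.mem_union.mp ha with h' | h'
                · exact hAT h'
                · exact hBT a (Finset.mem_of_mem_erase h') (Finset.ne_of_mem_erase h')
            have hTB : T ∩ B = B.erase i0 := by
              rw [hTeq]
              ext a
              simp only [Finset.mem_inter, Finset.mem_union, Finset.mem_erase]
              constructor
              · rintro ⟨(h | h), hB'⟩
                · exact absurd hB' (Finset.disjoint_left.mp hAB h)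
                · exact h
              · rintro ⟨hne, hB'⟩
                exact ⟨Or.inr ⟨hne, hB'⟩, hB'⟩
            have hvT : v T ≤ v A + α := by
              rw [hTeq]
              exact hex _ (Finset.erase_ssubset hi0)
            rw [hsum', hsum, hTfull0, hTB, if_neg hi0T, if_neg hjT, hcarde] at hkey
            simp only [Finset.card_empty, Nat.cast_zero, mul_zero, add_zero, zero_add] at hkey
            rw [hpj] at hkey
            have hprod : c * 1 ≤ c * (m - 1) :=
              mul_le_mul_of_nonneg_left (by linarith) hc0.le
            linarith [hvjA, hδc]


end Stmt10X

/-- Technical lemma for gross-substitutes valuations: for disjoint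
`A, B`, `j ∉ A ∪ B` and `x ≥ 0`, if every `i ∈ B` has zero marginal value with
respect to `A ∪ {j}` and `0 ≤ v(j|A) - x < v(B|A)`, then some `i ∈ B` has
`v(j|A) - x < v(i|A)`. -/
theorem stmt10 {n : ℕ} (v : Finset (Fin n) → ℝ)
    (hmono : ∀ S T : Finset (Fin n), S ⊆ T → v S ≤ v T)
    (hgs : ∀ p p' : Fin n → ℝ, (∀ k, p k ≤ p' k) →
      ∀ S : Finset (Fin n),
        (∀ T : Finset (Fin n), v T - ∑ i ∈ T, p i ≤ v S - ∑ i ∈ S, p i) →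
        ∃ T : Finset (Fin n),
          (∀ U : Finset (Fin n), v U - ∑ i ∈ U, p' i ≤ v T - ∑ i ∈ T, p' i) ∧
          ∀ k ∈ S, p k = p' k → k ∈ T)
    (A B : Finset (Fin n)) (hAB : Disjoint A B)
    (j : Fin n) (hj : j ∉ A ∪ B) (x : ℝ) (hx : 0 ≤ x)
    (hB0 : ∀ i ∈ B, v (insert i (insert j A)) - v (insert j A) = 0)
    (h1 : 0 ≤ v (insert j A) - v A - x)
    (h2 : v (insert j A) - v A - x < v (A ∪ B) - v A) :
    ∃ i ∈ B, v (insert j A) - v A - x < v (insert i A) - v A := by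
  exact Stmt10X.aux v hmono hgs A j x hx h1 B hAB hj hB0 h2
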